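/- Let n ≥ 3, let V = {0,1,…,n−1} with the natural order, and let Q be a partial quasi-pairing of V with v_Q^+ = v_Q^- + 1. Then {v_Q^-, v_Q^+} is a nontrivial module of Inv(underline(n), Q); in particular, Inv(underline(n), Q) is decomposable. -/

import Mathlib

open Set

/-- The arc relation of the tournament `Inv(underline(V), P)` obtained from the
transitive tournament on a linearly ordered type by reversing the arcs `(x,y)`
with `{x,y} ∈ P`. -/
def InvArc {α : Type*} [LinearOrder α] (P : Set (Set α)) (x y : α) : Prop :=
  (x < y ∧ ({x, y} : Set α) ∉ P) ∨ (y < x ∧ ({x, y} : Set α) ∈ P)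

/-- `M` is a module of the subtournament of `Inv(·, P)` induced on the vertex set `W`. -/
def IsModuleOn {α : Type*} [LinearOrder α] (P : Set (Set α)) (W M : Set α) : Prop :=
  M ⊆ W ∧ ∀ v ∈ W, v ∉ M →
    (∀ x ∈ M, InvArc P v x) ∨ (∀ x ∈ M, InvArc P x v)

/-- A subset of the vertex set `W` is trivial if it is empty, a singleton, or all of `W`. -/
def IsTrivialSubset {α : Type*} (W M : Set α) : Prop :=
  M = ∅ ∨ (∃ a, M = {a}) ∨ M = W

/-- A nontrivial module of the tournament `Inv(·, P)` induced on `W`. -/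
def IsNontrivialModuleOn {α : Type*} [LinearOrder α] (P : Set (Set α)) (W M : Set α) : Prop :=
  IsModuleOn P W M ∧ ¬ IsTrivialSubset W M

/-- The tournament `Inv(·, P)` induced on `W` is indecomposable: all its modules are trivial. -/
def IndecomposableOn {α : Type*} [LinearOrder α] (P : Set (Set α)) (W : Set α) : Prop :=
  ∀ M : Set α, IsModuleOn P W M → IsTrivialSubset W M

/-- The tournament `Inv(·, P)` induced on `W` is decomposable: it has a nontrivial module. -/
def DecomposableOn {α : Type*} [LinearOrder α] (P : Set (Set α)) (W : Set α) : Prop :=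
  ∃ M : Set α, IsNontrivialModuleOn P W M

/-- A co-module of the tournament `Inv(·, P)` on `W`: a subset `M` of `W` such that
`M` or `W ∖ M` is a nontrivial module. -/
def IsCoModuleOn {α : Type*} [LinearOrder α] (P : Set (Set α)) (W M : Set α) : Prop :=
  M ⊆ W ∧ (IsNontrivialModuleOn P W M ∨ IsNontrivialModuleOn P W (W \ M))

/-- `mc(underline(W))`: the family of minimal co-modules of the transitive tournament on `W`
(a minimal co-module contains no other co-module). -/
def mcOn {α : Type*} [LinearOrder α] (W : Set α) : Set (Set α) :=
  {M | IsCoModuleOn (∅ : Set (Set α)) W M ∧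
    ∀ C : Set α, IsCoModuleOn (∅ : Set (Set α)) W C → C ⊆ M → C = M}

/-- `S` is a transversal of the family `F`: it meets every member of `F`. -/
def TransversalOf {α : Type*} (S : Set α) (F : Set (Set α)) : Prop :=
  ∀ C ∈ F, (S ∩ C).Nonempty

/-- A partial pairing of `V`: a set of pairwise disjoint 2-element subsets of `V`. -/
def IsPartialPairingOn {α : Type*} (V : Set α) (P : Set (Set α)) : Prop :=
  (∀ B ∈ P, B ⊆ V ∧ B.ncard = 2) ∧
  ∀ B ∈ P, ∀ C ∈ P, B ≠ C → Disjoint B C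

/-- `I` is an interval of the totally ordered set `X`: every element of `X ∖ I` is greater
than all elements of `I` or smaller than all of them. -/
def IsIntervalOf {α : Type*} [LinearOrder α] (X I : Set α) : Prop :=
  I ⊆ X ∧ ∀ v ∈ X \ I, (∀ i ∈ I, v < i) ∨ (∀ i ∈ I, i < v)

/-- A nontrivial interval of `X`. -/
def IsNontrivialIntervalOf {α : Type*} [LinearOrder α] (X I : Set α) : Prop :=
  IsIntervalOf X I ∧ ¬ IsTrivialSubset X I

/-- A family of blocks `P` on the totally ordered set `X` is irreducible if no nontrivial
interval of `X` is a union of blocks of `P`. -/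
def IrreducibleOn {α : Type*} [LinearOrder α] (X : Set α) (P : Set (Set α)) : Prop :=
  ∀ R ⊆ P, ¬ IsNontrivialIntervalOf X (⋃₀ R)

/-- A partial quasi-pairing of `V`: a set `Q` of `m+1` two-element subsets of `V` (`m ≥ 1`)
whose union has size `2m+1`. -/
def IsPartialQuasiPairingOn {α : Type*} (V : Set α) (Q : Set (Set α)) : Prop :=
  (∀ B ∈ Q, B ⊆ V ∧ B.ncard = 2) ∧
  ∃ m : ℕ, 1 ≤ m ∧ (⋃₀ Q).ncard = 2 * m + 1 ∧ Q.ncard = m + 1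

/-- The distinguished data of a quasi-pairing `Q`: `vh = v̂_Q` is the element lying in the two
blocks `{vh, vm}` and `{vh, vp}` of `Q`, with `vm = v_Q^- < v_Q^+ = vp`. -/
def QPData {α : Type*} [LinearOrder α] (Q : Set (Set α)) (vh vm vp : α) : Prop :=
  ({vh, vm} : Set α) ∈ Q ∧ ({vh, vp} : Set α) ∈ Q ∧ vm < vp

/-- `Q_part`: the partition of `⋃₀ Q` obtained from `Q` by merging its two intersecting
blocks into `B_Q = {v̂_Q, v_Q^-, v_Q^+}`. -/
def QPart {α : Type*} [LinearOrder α] (Q : Set (Set α)) (vh vm vp : α) : Set (Set α) :=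
  (Q \ {({vh, vm} : Set α), ({vh, vp} : Set α)}) ∪ {({vh, vm, vp} : Set α)}

/-- Let `n ≥ 3`, `V = {0, …, n−1}`, and `Q` a partial quasi-pairing of
`V` with distinguished data `(vh, vm, vp)` such that `v_Q^+ = v_Q^- + 1`. Then
`{v_Q^-, v_Q^+}` is a nontrivial module of `Inv(underline(n), Q)`; in particular,
`Inv(underline(n), Q)` is decomposable. -/
lemma sUnion_ncard_le (F : Set (Set ℕ)) (hF : F.Finite)
    (h : ∀ B ∈ F, B.ncard ≤ 2 ∧ B.Finite) : (⋃₀ F).ncard ≤ 2 * F.ncard := by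
  revert h
  refine Set.Finite.induction_on F hF (by simp) ?_
  intro B F hBF hFfin ih h
  · have hB := h B (by simp)
    have h' : ∀ C ∈ F, C.ncard ≤ 2 ∧ C.Finite := fun C hC => h C (Or.inr hC)
    rw [Set.sUnion_insert, Set.ncard_insert_of_notMem hBF hFfin]
    calc (B ∪ ⋃₀ F).ncard ≤ B.ncard + (⋃₀ F).ncard := Set.ncard_union_le _ _
      _ ≤ 2 + 2 * F.ncard := by
          have := ih h'
          omega
      _ = 2 * (F.ncard + 1) := by ring
theorem stmt_14 (n : ℕ) (hn : 3 ≤ n) (Q : Set (Set ℕ))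
    (hQ : IsPartialQuasiPairingOn (Set.Iio n) Q)
    (vh vm vp : ℕ) (hdata : QPData Q vh vm vp) (h : vp = vm + 1) :
    IsNontrivialModuleOn Q (Set.Iio n) {vm, vp} ∧ DecomposableOn Q (Set.Iio n) := by
  obtain ⟨hblocks, m, hm1, hScard, hQcard⟩ := hQ
  obtain ⟨hB1, hB2, hmp⟩ := hdata
  set B1 : Set ℕ := {vh, vm} with hB1def
  set B2 : Set ℕ := {vh, vp} with hB2def
  -- distinctness
  have hvhm : vh ≠ vm := by
    intro e; have := (hblocks B1 hB1).2
    rw [hB1def, ← e] at this; simp at this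
  have hvhp : vh ≠ vp := by
    intro e; have := (hblocks B2 hB2).2
    rw [hB2def, ← e] at this; simp at this
  have hvmp : vm ≠ vp := hmp.ne
  have hB12 : B1 ≠ B2 := by
    intro e
    have : vm ∈ B2 := e ▸ (by simp [hB1def] : vm ∈ B1)
    rcases this with e1 | e1
    · exact hvhm e1.symm
    · exact hvmp e1
  -- finiteness
  have hSfin : (⋃₀ Q).Finite := Set.finite_of_ncard_ne_zero (by omega)
  have hQfin : Q.Finite := Set.finite_of_ncard_ne_zero (by omega)
  have hBfin : ∀ B ∈ Q, B.Finite := fun B hB =>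
    hSfin.subset (Set.subset_sUnion_of_mem hB)
  set Q' : Set (Set ℕ) := Q \ {B1, B2} with hQ'def
  have hQ'fin : Q'.Finite := hQfin.subset Set.diff_subset
  have hU'fin : (⋃₀ Q').Finite :=
    hSfin.subset (Set.sUnion_subset_sUnion Set.diff_subset)
  -- card of Q'
  have hsub : ({B1, B2} : Set (Set ℕ)) ⊆ Q := by
    intro x hx; rcases hx with e | e
    · exact e ▸ hB1
    · exact (Set.mem_singleton_iff.mp e) ▸ hB2
  have hQ'card : Q'.ncard = m - 1 := by
    rw [hQ'def, Set.ncard_diff hsub (Set.toFinite _), Set.ncard_pair hB12, hQcard]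
    omega
  -- card bound on ⋃₀ Q'
  have hU'le : (⋃₀ Q').ncard ≤ 2 * (m - 1) := by
    rw [← hQ'card]
    exact sUnion_ncard_le Q' hQ'fin
      (fun B hB => ⟨(hblocks B hB.1).2.le, hBfin B hB.1⟩)
  set T : Set ℕ := {vh, vm, vp} with hTdef
  have hTfin : T.Finite := Set.toFinite _
  have hTcard : T.ncard = 3 := by
    rw [hTdef, Set.ncard_insert_of_notMem (by simp [hvhm, hvhp]) (Set.toFinite _),
      Set.ncard_pair hvmp]
  have hSdecomp : ⋃₀ Q = ⋃₀ Q' ∪ T := by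
    have : Q = Q' ∪ {B1, B2} := by
      rw [hQ'def, Set.diff_union_of_subset hsub]
    rw [this, Set.sUnion_union]
    congr 1
    rw [Set.sUnion_pair, hB1def, hB2def, hTdef]
    ext x; simp; tauto
  -- key disjointness
  have hdisj : ⋃₀ Q' ∩ T = ∅ := by
    have hcount := Set.ncard_union_add_ncard_inter (⋃₀ Q') T hU'fin hTfin
    rw [← hSdecomp, hScard, hTcard] at hcount
    have h0 : (⋃₀ Q' ∩ T).ncard = 0 := by omega
    have hfin : (⋃₀ Q' ∩ T).Finite := hU'fin.subset Set.inter_subset_left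
    exact (Set.ncard_eq_zero hfin).mp h0
  have hnotinU' : ∀ x ∈ T, x ∉ ⋃₀ Q' := by
    intro x hx hx'
    have : x ∈ ⋃₀ Q' ∩ T := ⟨hx', hx⟩
    rw [hdisj] at this; exact this
  -- vertices in V
  have hvmV : vm < n := (hblocks B1 hB1).1 (by simp [hB1def])
  have hvpV : vp < n := (hblocks B2 hB2).1 (by simp [hB2def])
  -- the module
  have hmod : IsModuleOn Q (Set.Iio n) {vm, vp} := by
    refine ⟨?_, ?_⟩
    · intro x hx; rcases hx with e | e
      · exact e ▸ hvmV
      · exact (Set.mem_singleton_iff.mp e) ▸ hvpV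
    · intro v hv hvM
      have hvnm : v ≠ vm := fun e => hvM (Or.inl e)
      have hvnp : v ≠ vp := fun e => hvM (Or.inr e)
      by_cases hvh : v = vh
      · subst hvh
        rcases lt_or_gt_of_ne hvhm with hlt | hgt
        · -- v < vm < vp, both blocks in Q, arcs reversed: from M to v
          right
          intro x hx
          rcases hx with e | e
          · subst e
            exact Or.inr ⟨hlt, by rwa [Set.pair_comm]⟩
          · rw [Set.mem_singleton_iff] at e; subst e
            exact Or.inr ⟨by omega, by rwa [Set.pair_comm]⟩
        · -- vm < v, v ≠ vp so vp < v; arcs reversed: from v to M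
          have hgtp : vp < v := by omega
          left
          intro x hx
          rcases hx with e | e
          · subst e; exact Or.inr ⟨hgt, hB1⟩
          · rw [Set.mem_singleton_iff] at e; subst e
            exact Or.inr ⟨hgtp, hB2⟩
      · -- v ∉ {vh, vm, vp}: its blocks with vm, vp are not in Q
        have hnm : ({v, vm} : Set ℕ) ∉ Q := by
          intro hmem
          have hne1 : ({v, vm} : Set ℕ) ≠ B1 := by
            intro e
            have : v ∈ B1 := e ▸ (by simp : v ∈ ({v, vm} : Set ℕ))
            rcases this with e1 | e1
            · exact hvh e1
            · exact hvnm e1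
          have hne2 : ({v, vm} : Set ℕ) ≠ B2 := by
            intro e
            have : vm ∈ B2 := e ▸ (by simp : vm ∈ ({v, vm} : Set ℕ))
            rcases this with e1 | e1
            · exact hvhm e1.symm
            · exact hvmp e1
          exact hnotinU' vm (by simp [hTdef])
            ⟨{v, vm}, ⟨hmem, by simp [hne1, hne2]⟩, by simp⟩
        have hnp : ({v, vp} : Set ℕ) ∉ Q := by
          intro hmem
          have hne1 : ({v, vp} : Set ℕ) ≠ B1 := by
            intro e
            have : vp ∈ B1 := e ▸ (by simp : vp ∈ ({v, vp} : Set ℕ))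
            rcases this with e1 | e1
            · exact hvhp e1.symm
            · exact hvmp e1.symm
          have hne2 : ({v, vp} : Set ℕ) ≠ B2 := by
            intro e
            have : v ∈ B2 := e ▸ (by simp : v ∈ ({v, vp} : Set ℕ))
            rcases this with e1 | e1
            · exact hvh e1
            · exact hvnp e1
          exact hnotinU' vp (by simp [hTdef])
            ⟨{v, vp}, ⟨hmem, by simp [hne1, hne2]⟩, by simp⟩
        rcases lt_or_gt_of_ne hvnm with hlt | hgt
        · left
          intro x hx
          rcases hx with e | e
          · subst e; exact Or.inl ⟨hlt, hnm⟩
          · rw [Set.mem_singleton_iff] at e; subst e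
            exact Or.inl ⟨by omega, hnp⟩
        · have hgtp : vp < v := by omega
          right
          intro x hx
          rcases hx with e | e
          · subst e; exact Or.inl ⟨hgt, by rwa [Set.pair_comm]⟩
          · rw [Set.mem_singleton_iff] at e; subst e
            exact Or.inl ⟨hgtp, by rwa [Set.pair_comm]⟩
  have hnontriv : IsNontrivialModuleOn Q (Set.Iio n) {vm, vp} := by
    refine ⟨hmod, ?_⟩
    rintro (he | ⟨a, ha⟩ | hall)
    · have : vm ∈ (∅ : Set ℕ) := he ▸ (by simp : vm ∈ ({vm, vp} : Set ℕ))
      exact this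
    · have h1 : vm ∈ ({a} : Set ℕ) := ha ▸ (by simp : vm ∈ ({vm, vp} : Set ℕ))
      have h2 : vp ∈ ({a} : Set ℕ) := ha ▸ (by simp : vp ∈ ({vm, vp} : Set ℕ))
      rw [Set.mem_singleton_iff] at h1 h2
      exact hvmp (h1.trans h2.symm)
    · -- {vm, vp} = Iio n with n ≥ 3 is impossible
      have h0 : (0 : ℕ) ∈ ({vm, vp} : Set ℕ) := by rw [hall]; simp; omega
      have h2 : (2 : ℕ) ∈ ({vm, vp} : Set ℕ) := by rw [hall]; simp; omega
      simp only [Set.mem_insert_iff, Set.mem_singleton_iff] at h0 h2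
      omega
  exact ⟨hnontriv, {vm, vp}, hnontriv⟩
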